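/- Compatible function approximation for the state-option transition path manifold. If φ̃ ∈ ℝⁿ is a critical point of the squared error φ ↦ ε(φ) (i.e., the gradient of ε vanishes at φ̃), then G_ϑ φ̃ = w, where w_i = ∑_{s',o} μ(s',o) a_O(s',o) ∂_i β(o,s',ϑ). In particular, if G_ϑ is invertible, then −φ̃ = G_ϑ^{-1} · (−w); that is, since the termination gradient of the expected discounted return is −∑_{s',o} μ(s',o) ∂β(o,s',ϑ)/∂ϑ · a_O(s',o), the negative of the minimizing weight vector equals the natural gradient with respect to the termination parameters. -/

import Mathlib

/-- Partial derivative of `f : ℝⁿ → ℝ` with respect to the `i`-th coordinate of `ϑ`. -/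
noncomputable def pd {n : ℕ} (i : Fin n) (f : (Fin n → ℝ) → ℝ) (ϑ : Fin n → ℝ) : ℝ :=
  fderiv ℝ f ϑ (Pi.single i 1)

/-- Compatible function approximation for the state-option transition path manifold.
If `φ̃` is a critical point of the squared compatible-approximation error `ε`, then
`G_ϑ φ̃ = w`, where `w_i = ∑_{s',o} μ(s',o) a_O(s',o) ∂_i β(o,s',ϑ)`; in particular if
`G_ϑ` is invertible then `−φ̃ = G_ϑ⁻¹ (−w)`, the natural gradient with respect to the
termination parameters. -/
theorem compatible_function_approximation_terminations
    {S O : Type*} [Fintype S] [Fintype O] [Nonempty S] [Nonempty O] {n : ℕ}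
    (β : O → S → (Fin n → ℝ) → ℝ) (ϑ : Fin n → ℝ)
    (hβ0 : ∀ o s ϑ', 0 < β o s ϑ') (hβ1 : ∀ o s ϑ', β o s ϑ' < 1)
    (hβdiff : ∀ o s, ContDiff ℝ 1 (β o s))
    (πO : S → O → ℝ) (hπO0 : ∀ s o, 0 < πO s o) (hπO1 : ∀ s o, πO s o < 1)
    (hπOsum : ∀ s, ∑ o, πO s o = 1)
    (μ : S × O → ℝ) (hμ : ∀ p, 0 ≤ μ p)
    (qO : S → O → ℝ) (v : S → ℝ)
    (aO : S → O → ℝ) (haO : ∀ s' o, aO s' o = qO s' o - v s')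
    (β' : O → S → (Fin n → ℝ) → ℝ)
    (hβ' : ∀ o s' ϑ', β' o s' ϑ' = 1 - β o s' ϑ' + β o s' ϑ' * πO s' o)
    (u : O → S → ℝ) (hu : ∀ o s', u o s' = (1 - β o s' ϑ) * qO s' o + β o s' ϑ * v s')
    (a' : S → O → ℝ) (ha' : ∀ s' o, a' s' o = u o s' - qO s' o)
    (L : S → O → ℝ) (hL : ∀ s' o, L s' o = β' o s' ϑ / (β o s' ϑ * (1 - πO s' o)))
    (h : (Fin n → ℝ) → S → O → ℝ)
    (hh : ∀ φ s' o, h φ s' o = ∑ i, φ i * pd i (fun ϑ' => Real.log (β' o s' ϑ')) ϑ)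
    (ε : (Fin n → ℝ) → ℝ)
    (hε : ∀ φ, ε φ = ∑ s', ∑ o, μ (s', o) * L s' o * (h φ s' o - a' s' o) ^ 2)
    (G : Matrix (Fin n) (Fin n) ℝ)
    (hG : ∀ i j, G i j = -∑ s', ∑ o, μ (s', o)
        * pd i (fun ϑ' => Real.log (β o s' ϑ')) ϑ
        * pd j (fun ϑ' => Real.log (β' o s' ϑ')) ϑ)
    (w : Fin n → ℝ)
    (hw : ∀ i, w i = ∑ s', ∑ o, μ (s', o) * aO s' o * pd i (fun ϑ' => β o s' ϑ') ϑ)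
    (φt : Fin n → ℝ) (hcrit : fderiv ℝ ε φt = 0) :
    G.mulVec φt = w ∧ (IsUnit G → -φt = G⁻¹.mulVec (-w)) := by
  classical
  -- derivative data for β
  have hβfd : ∀ o s', HasFDerivAt (β o s') (fderiv ℝ (β o s') ϑ) ϑ := fun o s' =>
    (((hβdiff o s').differentiable one_ne_zero) ϑ).hasFDerivAt
  have hβpos : ∀ o s', 0 < β o s' ϑ := fun o s' => hβ0 o s' ϑ
  have hβ'pos : ∀ o s', 0 < β' o s' ϑ := by
    intro o s'
    rw [hβ']
    nlinarith [hβ0 o s' ϑ, hβ1 o s' ϑ, hπO0 s' o, hπO1 s' o]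
  have hβ'fd : ∀ o s', HasFDerivAt (β' o s') ((πO s' o - 1) • fderiv ℝ (β o s') ϑ) ϑ := by
    intro o s'
    have hfun : β' o s' = fun ϑ' => 1 - β o s' ϑ' + β o s' ϑ' * πO s' o := funext (hβ' o s')
    rw [hfun]
    have h1 := ((hasFDerivAt_const (1:ℝ) ϑ).fun_sub (hβfd o s')).fun_add ((hβfd o s').mul_const (πO s' o))
    refine h1.congr_fderiv ?_
    ext v
    simp only [ContinuousLinearMap.smulRight_apply, ContinuousLinearMap.add_apply,
      ContinuousLinearMap.sub_apply, ContinuousLinearMap.smul_apply, smul_eq_mul,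
      ContinuousLinearMap.zero_apply]
    ring
  -- values of the partial derivatives
  have hc : ∀ (i : Fin n) s' o, pd i (fun ϑ' => Real.log (β' o s' ϑ')) ϑ
      = (β' o s' ϑ)⁻¹ * ((πO s' o - 1) * fderiv ℝ (β o s') ϑ (Pi.single i 1)) := by
    intro i s' o
    have hfd := ((hβ'fd o s').log (hβ'pos o s').ne').fderiv
    simp only [pd, hfd, ContinuousLinearMap.smul_apply, smul_eq_mul]
  have hd : ∀ (i : Fin n) s' o, pd i (fun ϑ' => Real.log (β o s' ϑ')) ϑ
      = (β o s' ϑ)⁻¹ * fderiv ℝ (β o s') ϑ (Pi.single i 1) := by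
    intro i s' o
    have hfd := ((hβfd o s').log (hβpos o s').ne').fderiv
    simp only [pd, hfd, ContinuousLinearMap.smul_apply, smul_eq_mul]
  have hbpd : ∀ (i : Fin n) s' o, pd i (fun ϑ' => β o s' ϑ') ϑ
      = fderiv ℝ (β o s') ϑ (Pi.single i 1) := fun i s' o => rfl
  -- linear maps
  set ℓ : S → O → ((Fin n → ℝ) →L[ℝ] ℝ) := fun s' o =>
    ∑ i, (pd i (fun ϑ' => Real.log (β' o s' ϑ')) ϑ) • ContinuousLinearMap.proj i with hℓdef
  have hℓapp : ∀ s' o v, ℓ s' o v = ∑ i, v i * pd i (fun ϑ' => Real.log (β' o s' ϑ')) ϑ := by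
    intro s' o v
    simp [hℓdef, ContinuousLinearMap.sum_apply, mul_comm]
  have hh' : ∀ φ s' o, h φ s' o = ℓ s' o φ := by
    intro φ s' o; rw [hh, hℓapp]
  have hℓsingle : ∀ s' o (k : Fin n), ℓ s' o (Pi.single k 1)
      = pd k (fun ϑ' => Real.log (β' o s' ϑ')) ϑ := by
    intro s' o k
    rw [hℓapp]
    simp [Pi.single_apply]
  -- derivative of ε
  set D : (Fin n → ℝ) →L[ℝ] ℝ := ∑ s', ∑ o,
      (μ (s', o) * L s' o * (2 * (h φt s' o - a' s' o))) • ℓ s' o with hDdef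
  have hεfd : HasFDerivAt ε D φt := by
    have hεeq : ε = fun φ => ∑ s', ∑ o, μ (s', o) * L s' o * (ℓ s' o φ - a' s' o) ^ 2 := by
      funext φ
      rw [hε]
      exact Finset.sum_congr rfl fun s' _ => Finset.sum_congr rfl fun o _ => by rw [hh']
    rw [hεeq, hDdef]
    apply HasFDerivAt.fun_sum
    intro s' _
    apply HasFDerivAt.fun_sum
    intro o _
    have hℓfd : HasFDerivAt (fun φ => ℓ s' o φ) (ℓ s' o) φt := (ℓ s' o).hasFDerivAt
    have hsq : HasFDerivAt (fun φ => (ℓ s' o φ - a' s' o) * (ℓ s' o φ - a' s' o))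
        ((ℓ s' o φt - a' s' o) • ℓ s' o + (ℓ s' o φt - a' s' o) • ℓ s' o) φt :=
      (hℓfd.sub_const (a' s' o)).mul (hℓfd.sub_const (a' s' o))
    have h2 := hsq.const_mul (μ (s', o) * L s' o)
    have hpow : (fun φ => μ (s', o) * L s' o * (ℓ s' o φ - a' s' o) ^ 2)
        = fun φ => μ (s', o) * L s' o * ((ℓ s' o φ - a' s' o) * (ℓ s' o φ - a' s' o)) := by
      funext φ; ring
    rw [hpow]
    refine h2.congr_fderiv ?_
    ext v
    simp only [ContinuousLinearMap.smul_apply, ContinuousLinearMap.add_apply, smul_eq_mul]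
    rw [hh' φt s' o]
    ring
  have hD0 : D = 0 := by rw [← hεfd.fderiv]; exact hcrit
  -- the criticality condition pointwise
  have key : ∀ k : Fin n, ∑ s', ∑ o, μ (s', o) * L s' o * (2 * (h φt s' o - a' s' o))
      * pd k (fun ϑ' => Real.log (β' o s' ϑ')) ϑ = 0 := by
    intro k
    have h0 := congrArg (fun (f : (Fin n → ℝ) →L[ℝ] ℝ) => f (Pi.single k 1)) hD0
    simp only [hDdef, ContinuousLinearMap.sum_apply, ContinuousLinearMap.smul_apply,
      smul_eq_mul, ContinuousLinearMap.zero_apply] at h0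
    rw [← h0]
    exact Finset.sum_congr rfl fun s' _ => Finset.sum_congr rfl fun o _ => by
      rw [hℓsingle]
  -- scalar identities
  have hLc : ∀ (k : Fin n) s' o, L s' o * pd k (fun ϑ' => Real.log (β' o s' ϑ')) ϑ
      = -((β o s' ϑ)⁻¹ * fderiv ℝ (β o s') ϑ (Pi.single k 1)) := by
    intro k s' o
    rw [hL, hc]
    have h1 : β o s' ϑ ≠ 0 := (hβpos o s').ne'
    have h2 : β' o s' ϑ ≠ 0 := (hβ'pos o s').ne'
    have h3 : (1 : ℝ) - πO s' o ≠ 0 := by have := hπO1 s' o; intro hcon; linarith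
    field_simp
    ring
  have ha'val : ∀ s' o, a' s' o = -(β o s' ϑ * aO s' o) := by
    intro s' o; rw [ha', hu, haO]; ring
  -- main computation
  have main : G.mulVec φt = w := by
    funext k
    have hkey2 : ∑ s', ∑ o, (μ (s', o) * ((β o s' ϑ)⁻¹ * fderiv ℝ (β o s') ϑ (Pi.single k 1))
        * h φt s' o + μ (s', o) * aO s' o * fderiv ℝ (β o s') ϑ (Pi.single k 1)) = 0 := by
      have e1 : ∀ s' o, μ (s', o) * L s' o * (2 * (h φt s' o - a' s' o))
          * pd k (fun ϑ' => Real.log (β' o s' ϑ')) ϑ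
          = (-2 : ℝ) * (μ (s', o) * ((β o s' ϑ)⁻¹ * fderiv ℝ (β o s') ϑ (Pi.single k 1))
            * h φt s' o + μ (s', o) * aO s' o * fderiv ℝ (β o s') ϑ (Pi.single k 1)) := by
        intro s' o
        have h4 : μ (s', o) * L s' o * (2 * (h φt s' o - a' s' o))
            * pd k (fun ϑ' => Real.log (β' o s' ϑ')) ϑ
            = 2 * μ (s', o) * (h φt s' o - a' s' o)
              * (L s' o * pd k (fun ϑ' => Real.log (β' o s' ϑ')) ϑ) := by ring
        rw [h4, hLc, ha'val]
        have h1 : β o s' ϑ ≠ 0 := (hβpos o s').ne'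
        field_simp
        ring
      have h5 : ∑ s', ∑ o, (-2 : ℝ) * (μ (s', o) * ((β o s' ϑ)⁻¹
          * fderiv ℝ (β o s') ϑ (Pi.single k 1)) * h φt s' o
          + μ (s', o) * aO s' o * fderiv ℝ (β o s') ϑ (Pi.single k 1)) = 0 := by
        rw [← key k]
        exact (Finset.sum_congr rfl fun s' _ => Finset.sum_congr rfl fun o _ => (e1 s' o)).symm
      have h6 : (-2 : ℝ) * ∑ s', ∑ o, (μ (s', o) * ((β o s' ϑ)⁻¹
          * fderiv ℝ (β o s') ϑ (Pi.single k 1)) * h φt s' o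
          + μ (s', o) * aO s' o * fderiv ℝ (β o s') ϑ (Pi.single k 1)) = 0 := by
        rw [Finset.mul_sum]
        rw [← h5]
        exact Finset.sum_congr rfl fun s' _ => (Finset.mul_sum _ _ _)
      have := mul_eq_zero.mp h6
      rcases this with h | h
      · norm_num at h
      · exact h
    have hsplit := hkey2
    rw [Finset.sum_congr rfl (fun s' (_ : s' ∈ Finset.univ) => Finset.sum_add_distrib)] at hsplit
    rw [Finset.sum_add_distrib] at hsplit
    -- compute G.mulVec φt k
    have swap : ∀ f : S → O → Fin n → ℝ,
        ∑ i, (∑ s', ∑ o, f s' o i) * φt i = ∑ s', ∑ o, ∑ i, f s' o i * φt i := by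
      intro f
      simp_rw [Finset.sum_mul]
      rw [Finset.sum_comm]
      exact Finset.sum_congr rfl fun s' _ => Finset.sum_comm
    have hGk : Matrix.mulVec G φt k = -∑ s', ∑ o, μ (s', o) * ((β o s' ϑ)⁻¹
        * fderiv ℝ (β o s') ϑ (Pi.single k 1)) * h φt s' o := by
      have step1 : Matrix.mulVec G φt k = ∑ i, G k i * φt i := rfl
      have step2 : ∀ i : Fin n, G k i = -∑ s', ∑ o, μ (s', o) * ((β o s' ϑ)⁻¹
          * fderiv ℝ (β o s') ϑ (Pi.single k 1))
          * pd i (fun ϑ' => Real.log (β' o s' ϑ')) ϑ := by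
        intro i
        rw [hG]
        congr 1
        exact Finset.sum_congr rfl fun s' _ => Finset.sum_congr rfl fun o _ => by
          rw [hd]
      rw [step1]
      simp_rw [step2, neg_mul]
      rw [Finset.sum_neg_distrib]
      rw [swap (fun s' o i => μ (s', o) * ((β o s' ϑ)⁻¹
        * fderiv ℝ (β o s') ϑ (Pi.single k 1)) * pd i (fun ϑ' => Real.log (β' o s' ϑ')) ϑ)]
      congr 1
      refine Finset.sum_congr rfl fun s' _ => Finset.sum_congr rfl fun o _ => ?_
      rw [hh, Finset.mul_sum]
      exact Finset.sum_congr rfl fun i _ => by ring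
    rw [hGk, hw]
    have hwk : ∑ s', ∑ o, μ (s', o) * aO s' o * pd k (fun ϑ' => β o s' ϑ') ϑ
        = ∑ s', ∑ o, μ (s', o) * aO s' o * fderiv ℝ (β o s') ϑ (Pi.single k 1) := rfl
    rw [hwk]
    linarith [hsplit]
  refine ⟨main, fun hunit => ?_⟩
  rw [← main, Matrix.mulVec_neg, Matrix.mulVec_mulVec,
    Matrix.nonsing_inv_mul G ((Matrix.isUnit_iff_isUnit_det G).mp hunit), Matrix.one_mulVec]
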